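/- Let {v₀, v₁} be an orthonormal basis of ℂ² and let b, x ∈ {0,1}. Suppose the quantized basis of {v₀,v₁} equals b⊕1, i.e., max_{k∈{0,1}} |⟨v_k, H^{b⊕1}|0⟩⟩| ≥ max_{k∈{0,1}} |⟨v_k, H^{b}|0⟩⟩|. Then the bias of the outcome of measuring H^b|x⟩ in the basis {v₀,v₁} is at most 1/√2, i.e., | |⟨v₀, H^b|x⟩⟩|² − |⟨v₁, H^b|x⟩⟩|² | ≤ 1/√2. -/

import Mathlib

/-- The 2×2 Hadamard matrix `(1/√2)·[[1,1],[1,-1]]`. -/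
noncomputable def Hmat : Matrix (Fin 2) (Fin 2) ℂ :=
  ((1 / Real.sqrt 2 : ℝ) : ℂ) • !![1, 1; 1, -1]

/-- The standard basis vector `|x⟩` of ℂ². -/
def ket (x : Fin 2) : Fin 2 → ℂ := fun i => if i = x then 1 else 0

/-- The inner product `⟨v, ψ⟩` on ℂ² (conjugate-linear in the first argument). -/
noncomputable def dotc (v ψ : Fin 2 → ℂ) : ℂ :=
  star (v 0) * ψ 0 + star (v 1) * ψ 1

open ComplexConjugate in
lemma parseval (v : Fin 2 → Fin 2 → ℂ) (hnorm : ∀ k, dotc (v k) (v k) = 1)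
    (horth : dotc (v 0) (v 1) = 0) (ψ φ : Fin 2 → ℂ) :
    star (dotc (v 0) ψ) * dotc (v 0) φ + star (dotc (v 1) ψ) * dotc (v 1) φ = dotc ψ φ := by
  set M : Matrix (Fin 2) (Fin 2) ℂ := Matrix.of (fun k i => conj (v k i)) with hM
  have horth' : conj (v 1 0) * v 0 0 + conj (v 1 1) * v 0 1 = 0 := by
    have h := congrArg (starRingEnd ℂ) horth
    simp only [dotc, map_add, map_mul, Complex.star_def, Complex.conj_conj, map_zero] at h
    linear_combination h
  have h1 : M * M.conjTranspose = 1 := by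
    rw [show (1 : Matrix (Fin 2) (Fin 2) ℂ) = !![1,0;0,1] from (Matrix.one_fin_two)]
    ext k l
    fin_cases k <;> fin_cases l <;>
      simp [hM, Matrix.mul_apply, Fin.sum_univ_two, Matrix.conjTranspose_apply,
        Complex.conj_conj]
    · simpa [dotc, Complex.star_def] using hnorm 0
    · simpa [dotc, Complex.star_def] using horth
    · simpa using horth'
    · simpa [dotc, Complex.star_def] using hnorm 1
  have h2 : M.conjTranspose * M = 1 := mul_eq_one_comm.mp h1
  rw [show (1 : Matrix (Fin 2) (Fin 2) ℂ) = !![1,0;0,1] from (Matrix.one_fin_two)] at h2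
  rw [← Matrix.ext_iff] at h2
  have E00 := h2 0 0
  have E01 := h2 0 1
  have E10 := h2 1 0
  have E11 := h2 1 1
  simp [hM, Matrix.mul_apply, Fin.sum_univ_two, Matrix.conjTranspose_apply,
    Complex.conj_conj] at E00 E01 E10 E11
  simp only [dotc, Complex.star_def, map_add, map_mul, Complex.conj_conj]
  linear_combination (conj (ψ 0) * φ 0) * E00 + (conj (ψ 0) * φ 1) * E01 +
    (conj (ψ 1) * φ 0) * E10 + (conj (ψ 1) * φ 1) * E11

lemma key' (p q r s : ℝ) (hp : 0 ≤ p) (hq : 0 ≤ q) (hr : 0 ≤ r) (hs : 0 ≤ s)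
    (h1 : p^2 + q^2 = 1) (h2 : r^2 + s^2 = 1)
    (hmax : max p q ≤ max r s)
    (hA : p*r - q*s ≤ 1/Real.sqrt 2)
    (hB : 1/Real.sqrt 2 ≤ p*r + q*s)
    (hpq : q ≤ p) : p^2 - q^2 ≤ 1/Real.sqrt 2 := by
  have ht : (1/Real.sqrt 2)^2 = 1/2 := by
    rw [div_pow, one_pow, Real.sq_sqrt] <;> norm_num
  have ht0 : (0:ℝ) ≤ 1/Real.sqrt 2 := by positivity
  have hpmax : p ≤ max r s := le_trans (le_max_left p q) hmax
  rcases le_total s r with hsr | hrs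
  · have hpr : p ≤ r := le_trans hpmax (by simp [max_eq_left hsr])
    have hsq : s ≤ q := by nlinarith
    nlinarith
  · have hps : p ≤ s := le_trans hpmax (by simp [max_eq_right hrs])
    have hrq : r ≤ q := by nlinarith
    have h2pq : p*r + q*s ≤ 2*p*q := by
      nlinarith [sq_nonneg (p*s - q*r), sq_nonneg (p - s), sq_nonneg (q - r),
        mul_nonneg hp hq]
    nlinarith [sq_nonneg (p^2 - q^2)]

lemma key (p q r s : ℝ) (hp : 0 ≤ p) (hq : 0 ≤ q) (hr : 0 ≤ r) (hs : 0 ≤ s)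
    (h1 : p^2 + q^2 = 1) (h2 : r^2 + s^2 = 1)
    (hmax : max p q ≤ max r s)
    (hA : p*r - q*s ≤ 1/Real.sqrt 2)
    (hA' : q*s - p*r ≤ 1/Real.sqrt 2)
    (hB : 1/Real.sqrt 2 ≤ p*r + q*s) : |p^2 - q^2| ≤ 1/Real.sqrt 2 := by
  rcases le_total q p with h | h
  · rw [abs_of_nonneg (by nlinarith)]
    exact key' p q r s hp hq hr hs h1 h2 hmax hA hB h
  · rw [abs_of_nonpos (by nlinarith)]
    have : q^2 - p^2 ≤ 1/Real.sqrt 2 := by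
      refine key' q p s r hq hp hs hr (by linarith) (by linarith) ?_ (by linarith) (by linarith) h
      rwa [max_comm q p, max_comm s r]
    linarith

lemma norm_sq_complex (z : ℂ) : star z * z = ((‖z‖^2 : ℝ) : ℂ) := by
  rw [Complex.star_def, mul_comm, Complex.mul_conj]
  norm_cast
  rw [Complex.normSq_eq_norm_sq]

lemma main_aux (v : Fin 2 → Fin 2 → ℂ) (hnorm : ∀ k, dotc (v k) (v k) = 1)
    (horth : dotc (v 0) (v 1) = 0) (φ₀ ψ₁ φ₁ : Fin 2 → ℂ)
    (h00 : dotc φ₀ φ₀ = 1) (h11 : dotc ψ₁ ψ₁ = 1) (h22 : dotc φ₁ φ₁ = 1)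
    (h01 : dotc φ₀ ψ₁ = 0) (h02 : dotc φ₀ φ₁ = ((1/Real.sqrt 2 : ℝ) : ℂ))
    (hquant : max ‖dotc (v 0) φ₀‖ ‖dotc (v 1) φ₀‖ ≤ max ‖dotc (v 0) φ₁‖ ‖dotc (v 1) φ₁‖) :
    |‖dotc (v 0) φ₀‖ ^ 2 - ‖dotc (v 1) φ₀‖ ^ 2| ≤ 1 / Real.sqrt 2 ∧
    |‖dotc (v 0) ψ₁‖ ^ 2 - ‖dotc (v 1) ψ₁‖ ^ 2| ≤ 1 / Real.sqrt 2 := by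
  set a0 := dotc (v 0) φ₀
  set a1 := dotc (v 1) φ₀
  set c0 := dotc (v 0) φ₁
  set c1 := dotc (v 1) φ₁
  set e0 := dotc (v 0) ψ₁
  set e1 := dotc (v 1) ψ₁
  have P1 : ‖a0‖^2 + ‖a1‖^2 = 1 := by
    have h := parseval v hnorm horth φ₀ φ₀
    rw [h00, norm_sq_complex, norm_sq_complex] at h
    exact_mod_cast h
  have P2 : ‖c0‖^2 + ‖c1‖^2 = 1 := by
    have h := parseval v hnorm horth φ₁ φ₁
    rw [h22, norm_sq_complex, norm_sq_complex] at h
    exact_mod_cast h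
  have P3 : ‖e0‖^2 + ‖e1‖^2 = 1 := by
    have h := parseval v hnorm horth ψ₁ ψ₁
    rw [h11, norm_sq_complex, norm_sq_complex] at h
    exact_mod_cast h
  have P4 : star a0 * c0 + star a1 * c1 = ((1/Real.sqrt 2 : ℝ) : ℂ) := by
    rw [← h02]; exact parseval v hnorm horth φ₀ φ₁
  have P5 : star a0 * e0 + star a1 * e1 = 0 := by
    rw [← h01]; exact parseval v hnorm horth φ₀ ψ₁
  have ht0 : (0:ℝ) ≤ 1/Real.sqrt 2 := by positivity
  have hP4n : ‖star a0 * c0 + star a1 * c1‖ = 1/Real.sqrt 2 := by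
    rw [P4, Complex.norm_real, Real.norm_eq_abs, abs_of_nonneg ht0]
  have hz : ‖star a0 * c0‖ = ‖a0‖ * ‖c0‖ := by rw [norm_mul, norm_star]
  have hw : ‖star a1 * c1‖ = ‖a1‖ * ‖c1‖ := by rw [norm_mul, norm_star]
  have hB : 1/Real.sqrt 2 ≤ ‖a0‖*‖c0‖ + ‖a1‖*‖c1‖ := by
    rw [← hz, ← hw, ← hP4n]; exact norm_add_le _ _
  have hA : ‖a0‖*‖c0‖ - ‖a1‖*‖c1‖ ≤ 1/Real.sqrt 2 := by
    have h := norm_add_le (star a0 * c0 + star a1 * c1) (-(star a1 * c1))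
    simp only [add_neg_cancel_right, norm_neg] at h
    rw [hz, hw] at h
    rw [hP4n] at h
    linarith
  have hA' : ‖a1‖*‖c1‖ - ‖a0‖*‖c0‖ ≤ 1/Real.sqrt 2 := by
    have h := norm_add_le (star a0 * c0 + star a1 * c1) (-(star a0 * c0))
    have h2 : star a0 * c0 + star a1 * c1 + -(star a0 * c0) = star a1 * c1 := by ring
    rw [h2, norm_neg, hz, hw, hP4n] at h
    linarith
  have first : |‖a0‖^2 - ‖a1‖^2| ≤ 1/Real.sqrt 2 :=
    key _ _ _ _ (norm_nonneg _) (norm_nonneg _) (norm_nonneg _) (norm_nonneg _)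
      P1 P2 hquant hA hA' hB
  refine ⟨first, ?_⟩
  have hP5 : ‖a0‖ * ‖e0‖ = ‖a1‖ * ‖e1‖ := by
    have h : star a0 * e0 = -(star a1 * e1) := by linear_combination P5
    have := congrArg norm h
    rwa [norm_neg, norm_mul, norm_mul, norm_star, norm_star] at this
  have hE0 : ‖e0‖^2 = ‖a1‖^2 := by
    have hsq : ‖a0‖^2 * ‖e0‖^2 = ‖a1‖^2 * ‖e1‖^2 := by
      have := congrArg (fun x => x^2) hP5
      simp only [mul_pow] at this
      exact this
    nlinarith
  have hE1 : ‖e1‖^2 = ‖a0‖^2 := by nlinarith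
  rw [hE0, hE1, abs_sub_comm]
  exact first

lemma hmv0 : Hmat.mulVec (ket 0) = fun _ => ((1/Real.sqrt 2 : ℝ) : ℂ) := by
  funext i
  fin_cases i <;>
    simp [Hmat, ket, Matrix.mulVec, dotProduct, Fin.sum_univ_two]

lemma hmv1 : Hmat.mulVec (ket 1) = ![((1/Real.sqrt 2 : ℝ) : ℂ), -((1/Real.sqrt 2 : ℝ) : ℂ)] := by
  funext i
  fin_cases i <;>
    simp [Hmat, ket, Matrix.mulVec, dotProduct, Fin.sum_univ_two]

lemma hc2 : ((1/Real.sqrt 2 : ℝ) : ℂ) * ((1/Real.sqrt 2 : ℝ) : ℂ) = ((1/2 : ℝ) : ℂ) := by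
  norm_cast
  rw [div_mul_div_comm, one_mul, Real.mul_self_sqrt] <;> norm_num


/-- If the quantized basis of the orthonormal basis `{v 0, v 1}` of ℂ² equals `b ⊕ 1`,
i.e. `max_k |⟨v k, H^{b⊕1}|0⟩⟩| ≥ max_k |⟨v k, H^b|0⟩⟩|`, then the bias of the
outcome of measuring `H^b|x⟩` in `{v 0, v 1}` is at most `1/√2`. -/
theorem stmt11 (v : Fin 2 → Fin 2 → ℂ)
    (hnorm : ∀ k, dotc (v k) (v k) = 1) (horth : dotc (v 0) (v 1) = 0)
    (b x : Fin 2)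
    (hquant :
      max ‖dotc (v 0) ((Hmat ^ (b : ℕ)).mulVec (ket 0))‖
          ‖dotc (v 1) ((Hmat ^ (b : ℕ)).mulVec (ket 0))‖
        ≤ max ‖dotc (v 0) ((Hmat ^ ((b + 1 : Fin 2) : ℕ)).mulVec (ket 0))‖
            ‖dotc (v 1) ((Hmat ^ ((b + 1 : Fin 2) : ℕ)).mulVec (ket 0))‖) :
    |‖dotc (v 0) ((Hmat ^ (b : ℕ)).mulVec (ket x))‖ ^ 2
        - ‖dotc (v 1) ((Hmat ^ (b : ℕ)).mulVec (ket x))‖ ^ 2|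
      ≤ 1 / Real.sqrt 2 := by
  set c : ℂ := ((1/Real.sqrt 2 : ℝ) : ℂ) with hc
  have hstarc : star c = c := by rw [hc, Complex.star_def, Complex.conj_ofReal]
  set w0 : Fin 2 → ℂ := fun _ => c with hw0
  set w1 : Fin 2 → ℂ := ![c, -c] with hw1
  have d00 : dotc (ket 0) (ket 0) = 1 := by simp [dotc, ket]
  have d11 : dotc (ket 1) (ket 1) = 1 := by simp [dotc, ket]
  have d01 : dotc (ket 0) (ket 1) = 0 := by simp [dotc, ket]
  have dw0w0 : dotc w0 w0 = 1 := by
    simp only [dotc, hw0, hstarc]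
    rw [hc2]; norm_num
  have dw1w1 : dotc w1 w1 = 1 := by
    simp only [dotc, hw1, Matrix.cons_val_zero, Matrix.cons_val_one, Matrix.head_cons,
      star_neg, hstarc]
    rw [show -c * -c = c * c by ring, hc2]; norm_num
  have dw0w1 : dotc w0 w1 = 0 := by
    simp only [dotc, hw0, hw1, Matrix.cons_val_zero, Matrix.cons_val_one, Matrix.head_cons,
      hstarc]
    ring
  have dk0w0 : dotc (ket 0) w0 = c := by simp [dotc, ket, hw0]
  have dw0k0 : dotc w0 (ket 0) = c := by simp [dotc, ket, hw0, hstarc]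
  have hcase : ((b:ℕ) = 0 ∧ ((b+1 : Fin 2):ℕ) = 1) ∨ ((b:ℕ) = 1 ∧ ((b+1 : Fin 2):ℕ) = 0) := by
    fin_cases b <;> simp
  have hx : ket x = ket 0 ∨ ket x = ket 1 := by
    fin_cases x
    · exact Or.inl rfl
    · exact Or.inr rfl
  rcases hcase with ⟨hb, hb1⟩ | ⟨hb, hb1⟩
  · rw [hb, hb1, pow_zero, pow_one, Matrix.one_mulVec, hmv0] at hquant
    rw [hb, pow_zero, Matrix.one_mulVec] at *
    rcases hx with hx | hx <;> rw [hx]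
    · exact (main_aux v hnorm horth (ket 0) (ket 1) w0 d00 d11 dw0w0 d01 dk0w0 hquant).1
    · exact (main_aux v hnorm horth (ket 0) (ket 1) w0 d00 d11 dw0w0 d01 dk0w0 hquant).2
  · rw [hb, hb1, pow_zero, pow_one, Matrix.one_mulVec, hmv0] at hquant
    rw [hb, pow_one] at *
    rcases hx with hx | hx <;> rw [hx]
    · rw [hmv0]
      exact (main_aux v hnorm horth w0 w1 (ket 0) dw0w0 dw1w1 d00 dw0w1 dw0k0 hquant).1
    · rw [hmv1]
      exact (main_aux v hnorm horth w0 w1 (ket 0) dw0w0 dw1w1 d00 dw0w1 dw0k0 hquant).2
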